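/- arXiv:2604.18826 — 2 statements merged into one kernel-verified Lean document; each statement's English description precedes it below -/
import Mathlib

section
/- Single-step dominance at a refueling node in the backward labeling algorithm: let μ ∈ (0,1], R ≥ 0, C ∈ ℝ, λ ≥ 0, w_2 ≥ 0, w_4 ≥ 0. Define the refueling amount r(u) = min(R, u/μ − C) and the backward refueling step (φ, u) ↦ (φ − w_2 − r(u)·(λ + w_4), u/μ − r(u)). Then (i) u/μ − r(u) = max(u/μ − R, C), so the post-step mass is a nondecreasing function of u, and r(u) is a nondecreasing function of u; (ii) for two labels with φ_1 ≤ φ_2 and u_1 ≥ u_2, the resulting labels satisfy φ_1′ ≤ φ_2′ and u_1′ ≥ u_2′. -/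
/-- Single-step dominance at a refueling node in the backward labeling algorithm.
With refueling amount `r(u) = min(R, u/μ − C)` and backward refueling step
`(φ, u) ↦ (φ − w₂ − r(u)(λ + w₄), u/μ − r(u))`:
(i) the post-step mass is `max(u/μ − R, C)`, hence nondecreasing in `u`, and `r(u)`
is nondecreasing in `u`; (ii) the step preserves the dominance relation
`φ₁ ≤ φ₂ ∧ u₁ ≥ u₂`. -/
theorem refuel_step_preserves_dominance
    (μ R C lam w_2 w_4 : ℝ)
    (hμ0 : 0 < μ) (hμ1 : μ ≤ 1) (hR : 0 ≤ R) (hlam : 0 ≤ lam)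
    (hw2 : 0 ≤ w_2) (hw4 : 0 ≤ w_4) :
    -- (i) post-step mass formula and monotonicity
    (∀ u : ℝ, u / μ - min R (u / μ - C) = max (u / μ - R) C)
    ∧ (∀ u u' : ℝ, u ≤ u' →
        u / μ - min R (u / μ - C) ≤ u' / μ - min R (u' / μ - C))
    ∧ (∀ u u' : ℝ, u ≤ u' → min R (u / μ - C) ≤ min R (u' / μ - C))
    -- (ii) dominance preservation
    ∧ (∀ φ_1 u_1 φ_2 u_2 : ℝ, φ_1 ≤ φ_2 → u_1 ≥ u_2 →
        φ_1 - w_2 - min R (u_1 / μ - C) * (lam + w_4)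
            ≤ φ_2 - w_2 - min R (u_2 / μ - C) * (lam + w_4)
        ∧ u_1 / μ - min R (u_1 / μ - C) ≥ u_2 / μ - min R (u_2 / μ - C)) := by
  have hdiv : ∀ u u' : ℝ, u ≤ u' → u / μ ≤ u' / μ := fun u u' h =>
    by gcongr
  have hmin : ∀ u u' : ℝ, u ≤ u' → min R (u / μ - C) ≤ min R (u' / μ - C) := fun u u' h =>
    min_le_min le_rfl (by linarith [hdiv u u' h])
  have hmass : ∀ u : ℝ, u / μ - min R (u / μ - C) = max (u / μ - R) C := by
    intro u
    rcases le_total R (u / μ - C) with h | h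
    · rw [min_eq_left h, max_eq_left (by linarith)]
    · rw [min_eq_right h, max_eq_right (by linarith)]; ring
  have hmono : ∀ u u' : ℝ, u ≤ u' →
      u / μ - min R (u / μ - C) ≤ u' / μ - min R (u' / μ - C) := by
    intro u u' h
    rw [hmass u, hmass u']
    exact max_le_max (by linarith [hdiv u u' h]) le_rfl
  refine ⟨hmass, hmono, hmin, fun φ_1 u_1 φ_2 u_2 hφ hu => ⟨?_, hmono u_2 u_1 hu⟩⟩
  have := mul_le_mul_of_nonneg_right (hmin u_2 u_1 hu) (by linarith : (0:ℝ) ≤ lam + w_4)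
  linarith
end

section
/- Dominance is preserved along any common remaining path, so pruning a dominated label preserves optimality: consider any finite sequence of backward steps, each being either a target step with parameters μ ∈ (0,1], s ≥ 0, p, w_1 ∈ ℝ, mapping (φ, u) ↦ (φ + (p − w_1), u/μ + s), or a refueling step with parameters μ ∈ (0,1], R ≥ 0, C ∈ ℝ, λ ≥ 0, w_2 ≥ 0, w_4 ≥ 0, mapping (φ, u) ↦ (φ − w_2 − r(u)(λ + w_4), u/μ − r(u)) with r(u) = min(R, u/μ − C). If two labels satisfy φ_1 ≤ φ_2 and u_1 ≥ u_2, then after applying the entire sequence to both, the resulting labels satisfy φ_1′ ≤ φ_2′ and u_1′ ≥ u_2′; consequently, for every λ ≥ 0 and every constant κ ∈ ℝ, the final reduced costs satisfy φ_1′ − λ(u_1′ − κ) ≤ φ_2′ − λ(u_2′ − κ). -/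
/-- A backward step of the labeling algorithm: either a target step with parameters
`(μ, s, p, w₁)` or a refueling step with parameters `(μ, R, C, λ, w₂, w₄)`. -/
inductive BackwardStep where
  | target (μ s p w1 : ℝ) : BackwardStep
  | refuel (μ R C lam w2 w4 : ℝ) : BackwardStep

/-- Parameter validity of a backward step: mass ratios lie in `(0,1]`, the payload
mass, remaining capacity, weighting factor and dual prices are nonnegative. -/
def BackwardStep.Valid : BackwardStep → Prop
  | .target μ s _ _ => 0 < μ ∧ μ ≤ 1 ∧ 0 ≤ s
  | .refuel μ R _ lam w2 w4 => 0 < μ ∧ μ ≤ 1 ∧ 0 ≤ R ∧ 0 ≤ lam ∧ 0 ≤ w2 ∧ 0 ≤ w4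

/-- Applying one backward step to a label `(φ, u)`:
a target step maps `(φ, u) ↦ (φ + (p − w₁), u/μ + s)`; a refueling step refuels
`r(u) = min(R, u/μ − C)` and maps `(φ, u) ↦ (φ − w₂ − r(u)(λ + w₄), u/μ − r(u))`. -/
noncomputable def BackwardStep.apply : BackwardStep → ℝ × ℝ → ℝ × ℝ
  | .target μ s p w1, (φ, u) => (φ + (p - w1), u / μ + s)
  | .refuel μ R C lam w2 w4, (φ, u) =>
      (φ - w2 - min R (u / μ - C) * (lam + w4), u / μ - min R (u / μ - C))

/-- Applying a finite sequence of backward steps to a label. -/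
noncomputable def applyBackwardSteps (L : List BackwardStep) (x : ℝ × ℝ) : ℝ × ℝ :=
  L.foldl (fun x step => step.apply x) x

lemma sub_min_eq_max (x R C : ℝ) : x - min R (x - C) = max (x - R) C := by
  rcases le_total R (x - C) with h | h
  · rw [min_eq_left h, max_eq_left (by linarith)]
  · rw [min_eq_right h, max_eq_right (by linarith)]; ring

lemma step_mono (step : BackwardStep) (hv : step.Valid) (x y : ℝ × ℝ)
    (hφ : x.1 ≤ y.1) (hu : y.2 ≤ x.2) :
    (step.apply x).1 ≤ (step.apply y).1 ∧ (step.apply y).2 ≤ (step.apply x).2 := by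
  obtain ⟨φ1, u1⟩ := x; obtain ⟨φ2, u2⟩ := y
  simp only at hφ hu
  cases step with
  | target μ s p w1 =>
      obtain ⟨hμ, _, _⟩ := hv
      refine ⟨by simpa [BackwardStep.apply] using hφ, ?_⟩
      simp only [BackwardStep.apply]
      gcongr
  | refuel μ R C lam w2 w4 =>
      obtain ⟨hμ, _, hR, hlam, hw2, hw4⟩ := hv
      have hdiv : u2 / μ ≤ u1 / μ := by gcongr
      have hmin : min R (u2 / μ - C) ≤ min R (u1 / μ - C) :=
        min_le_min le_rfl (by linarith)
      constructor
      · simp only [BackwardStep.apply]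
        have : min R (u2 / μ - C) * (lam + w4) ≤ min R (u1 / μ - C) * (lam + w4) :=
          mul_le_mul_of_nonneg_right hmin (by linarith)
        linarith
      · simp only [BackwardStep.apply]
        rw [sub_min_eq_max, sub_min_eq_max]
        exact max_le_max (by linarith) le_rfl

lemma steps_mono (L : List BackwardStep) (hL : ∀ step ∈ L, step.Valid)
    (x y : ℝ × ℝ) (hφ : x.1 ≤ y.1) (hu : y.2 ≤ x.2) :
    (applyBackwardSteps L x).1 ≤ (applyBackwardSteps L y).1
    ∧ (applyBackwardSteps L y).2 ≤ (applyBackwardSteps L x).2 := by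
  induction L generalizing x y with
  | nil => exact ⟨hφ, hu⟩
  | cons s t ih =>
      have hs := step_mono s (hL s (by simp)) x y hφ hu
      exact ih (fun st hst => hL st (by simp [hst])) _ _ hs.1 hs.2

/-- Dominance is preserved along any common remaining path, so pruning a dominated
label preserves optimality: if `φ₁ ≤ φ₂` and `u₁ ≥ u₂`, then after applying any finite
sequence of valid backward steps to both labels, `φ₁′ ≤ φ₂′` and `u₁′ ≥ u₂′`; hence
the final reduced costs satisfy `φ₁′ − λ(u₁′ − κ) ≤ φ₂′ − λ(u₂′ − κ)` for every
`λ ≥ 0` and constant `κ`. -/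
theorem dominance_preserved_along_path
    (L : List BackwardStep) (hL : ∀ step ∈ L, step.Valid)
    (φ_1 u_1 φ_2 u_2 : ℝ) (hφ : φ_1 ≤ φ_2) (hu : u_1 ≥ u_2) :
    (applyBackwardSteps L (φ_1, u_1)).1 ≤ (applyBackwardSteps L (φ_2, u_2)).1
    ∧ (applyBackwardSteps L (φ_1, u_1)).2 ≥ (applyBackwardSteps L (φ_2, u_2)).2
    ∧ ∀ lam κ : ℝ, 0 ≤ lam →
        (applyBackwardSteps L (φ_1, u_1)).1 - lam * ((applyBackwardSteps L (φ_1, u_1)).2 - κ)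
          ≤ (applyBackwardSteps L (φ_2, u_2)).1 - lam * ((applyBackwardSteps L (φ_2, u_2)).2 - κ) := by
  obtain ⟨h1, h2⟩ := steps_mono L hL (φ_1, u_1) (φ_2, u_2) hφ hu
  refine ⟨h1, h2, fun lam κ hlam => ?_⟩
  have := mul_le_mul_of_nonneg_left h2 hlam
  linarith
end
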